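/- Let R ≥ 1 and a_1 > 0, a_2 > 0. Let θ_1, θ_2, …, θ_R be independent real random variables with θ_1 ∼ Gamma(a_1, 1) and θ_m ∼ Gamma(a_2, 1) for m = 2,…,R, and define λ_r = ∏_{m=1}^{r} θ_m^{−1} for r = 1,…,R (the MIG(a_1,a_2) random vector). Then the law of λ = (λ_1,…,λ_R) has full L1 support on ℝ_{≥0}^R: for every λ^0 ∈ ℝ^R with nonnegative entries and every ε > 0, P(Σ_{r=1}^R |λ_r − λ^0_r| < ε) > 0. -/

import Mathlib

open MeasureTheory ProbabilityTheory
open scoped ENNReal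

lemma gammaMeasure_Ioo_pos {a c d : ℝ} (ha : 0 < a) (hc : 0 < c) (hcd : c < d) :
    0 < gammaMeasure a 1 (Set.Ioo c d) := by
  rw [gammaMeasure, withDensity_apply _ measurableSet_Ioo]
  have hmeas : Measurable (gammaPDF a 1) := (measurable_gammaPDFReal a 1).ennreal_ofReal
  rw [lintegral_pos_iff_support hmeas]
  have hsub : Set.Ioo c d ⊆ Function.support (gammaPDF a 1) := by
    intro x hx
    have hx0 : 0 < x := hc.trans hx.1
    have : 0 < gammaPDF a 1 x := by
      rw [gammaPDF_of_nonneg hx0.le]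
      exact ENNReal.ofReal_pos.mpr (by
        have := gammaPDFReal_pos (x := x) ha one_pos hx0
        rw [gammaPDFReal, if_pos hx0.le] at this
        exact this)
    exact this.ne'
  calc (0 : ℝ≥0∞) < volume (Set.Ioo c d) := by
        rw [Real.volume_Ioo]; exact ENNReal.ofReal_pos.mpr (by linarith)
    _ = (volume.restrict (Set.Ioo c d)) (Set.Ioo c d) := by
        rw [Measure.restrict_apply measurableSet_Ioo, Set.inter_self]
    _ ≤ (volume.restrict (Set.Ioo c d)) (Function.support (gammaPDF a 1)) :=
        measure_mono hsub

/-- **Lemma 3.3**: the multiplicative inverse gamma random vector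
`λ_r = ∏_{m=1}^r θ_m⁻¹`, with `θ_1 ∼ Gamma(a_1,1)` and `θ_m ∼ Gamma(a_2,1)` for `m > 1`
all independent, has full `L1` support on the nonnegative orthant `ℝ_{≥0}^R`. -/
theorem mig_full_support {Ω : Type*} [MeasurableSpace Ω]
    (P : Measure Ω) [IsProbabilityMeasure P]
    (R : ℕ) (hR : 1 ≤ R) (a1 a2 : ℝ) (ha1 : 0 < a1) (ha2 : 0 < a2)
    (θ : Fin R → Ω → ℝ) (hmeas : ∀ r, Measurable (θ r))
    (hindep : iIndepFun θ P)
    (hlaw1 : P.map (θ ⟨0, hR⟩) = gammaMeasure a1 1)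
    (hlawm : ∀ r : Fin R, 0 < (r : ℕ) → P.map (θ r) = gammaMeasure a2 1)
    (lam0 : Fin R → ℝ) (hlam0 : ∀ r, 0 ≤ lam0 r) (ε : ℝ) (hε : 0 < ε) :
    0 < P {ω | ∑ r, |(∏ m ∈ Finset.Iic r, (θ m ω)⁻¹) - lam0 r| < ε} := by
  have hRpos : (0 : ℝ) < R := by exact_mod_cast hR
  set δ : ℝ := ε / (2 * R) with hδdef
  have hδ : 0 < δ := by positivity
  -- extended target vector
  set L : ℕ → ℝ := fun k => if h : k < R then lam0 ⟨k, h⟩ + δ else 1 with hLdef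
  have hLpos : ∀ k, 0 < L k := by
    intro k; simp only [hLdef]; split
    · have := hlam0 ⟨k, ‹_›⟩; linarith
    · norm_num
  set g : ℕ → ℝ := fun k => if k = 0 then 1 else L (k - 1) with hgdef
  have hgpos : ∀ k, 0 < g k := by
    intro k; simp only [hgdef]; split
    · norm_num
    · exact hLpos _
  set tN : ℕ → ℝ := fun k => g k / g (k + 1) with htNdef
  have htNpos : ∀ k, 0 < tN k := fun k => div_pos (hgpos k) (hgpos (k + 1))
  set tstar : Fin R → ℝ := fun m => tN m.val with htstardef
  have htstarpos : ∀ m, 0 < tstar m := fun m => htNpos m.val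
  -- telescoping product
  have hgsucc : ∀ n : ℕ, g (n + 1) = L n := by
    intro n; simp [hgdef]
  have keyN : ∀ n : ℕ, ∏ k ∈ Finset.range (n + 1), (tN k)⁻¹ = L n := by
    intro n
    induction n with
    | zero =>
      simp only [Finset.range_one, Finset.prod_singleton, htNdef, inv_div, hgsucc 0]
      simp [hgdef]
    | succ n ih =>
      rw [Finset.prod_range_succ, ih]
      simp only [htNdef, inv_div, hgsucc, hgsucc (n + 1)]
      rw [mul_comm, div_mul_cancel₀ _ (hLpos n).ne']
  have key : ∀ r : Fin R, ∏ m ∈ Finset.Iic r, (tstar m)⁻¹ = L r.val := by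
    intro r
    have h1 : ∏ m ∈ Finset.Iic r, (tstar m)⁻¹ = ∏ k ∈ Finset.Iic (r : ℕ), (tN k)⁻¹ := by
      rw [← Fin.map_valEmbedding_Iic, Finset.prod_map]; rfl
    have h2 : Finset.Iic (r : ℕ) = Finset.range ((r : ℕ) + 1) := by
      ext k; simp [Nat.lt_succ_iff]
    rw [h1, h2, keyN]
  have hLval : ∀ r : Fin R, L r.val = lam0 r + δ := by
    intro r; simp only [hLdef]; rw [dif_pos r.isLt]
  -- the continuous functional
  set G : (Fin R → ℝ) → ℝ :=
    fun t => ∑ r, |(∏ m ∈ Finset.Iic r, (t m)⁻¹) - lam0 r| with hGdef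
  have hGt : G tstar = R * δ := by
    simp only [hGdef]
    have : ∀ r : Fin R, |(∏ m ∈ Finset.Iic r, (tstar m)⁻¹) - lam0 r| = δ := by
      intro r; rw [key r, hLval r]; rw [add_sub_cancel_left, abs_of_pos hδ]
    rw [Finset.sum_congr rfl fun r _ => this r]
    simp [mul_comm]
  have hGlt : G tstar < ε := by
    rw [hGt, hδdef]
    rw [mul_div_assoc']
    rw [div_lt_iff₀ (by positivity)]
    nlinarith
  have hGcont : ContinuousAt G tstar := by
    unfold ContinuousAt
    simp only [hGdef]
    apply tendsto_finset_sum
    intro r _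
    apply Filter.Tendsto.abs
    apply Filter.Tendsto.sub_const
    apply tendsto_finset_prod
    intro m _
    exact ((continuous_apply m).continuousAt).inv₀ (htstarpos m).ne'
  obtain ⟨η, hη, hball⟩ := Metric.mem_nhds_iff.mp (hGcont (Iio_mem_nhds hGlt))
  haveI : Nonempty (Fin R) := ⟨⟨0, hR⟩⟩
  set m0 : ℝ := Finset.univ.inf' Finset.univ_nonempty tstar with hm0def
  have hm0pos : 0 < m0 := (Finset.lt_inf'_iff _).mpr fun r _ => htstarpos r
  have hm0le : ∀ r, m0 ≤ tstar r := fun r => Finset.inf'_le _ (Finset.mem_univ r)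
  set η' : ℝ := min η (m0 / 2) with hη'def
  have hη' : 0 < η' := lt_min hη (by linarith)
  have hη'le : η' ≤ η := min_le_left _ _
  have hη'm0 : η' ≤ m0 / 2 := min_le_right _ _
  set c : Fin R → ℝ := fun r => tstar r - η' with hcdef
  set d : Fin R → ℝ := fun r => tstar r + η' with hddef
  have hcpos : ∀ r, 0 < c r := by
    intro r; have := hm0le r; simp only [hcdef]; linarith
  have hcd : ∀ r, c r < d r := by
    intro r; simp only [hcdef, hddef]; linarith
  -- the box event
  have hsub : (⋂ r, θ r ⁻¹' Set.Ioo (c r) (d r)) ⊆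
      {ω | ∑ r, |(∏ m ∈ Finset.Iic r, (θ m ω)⁻¹) - lam0 r| < ε} := by
    intro ω hω
    set y : Fin R → ℝ := fun r => θ r ω with hydef
    have hy : ∀ r, |y r - tstar r| < η' := by
      intro r
      have hr : θ r ω ∈ Set.Ioo (c r) (d r) := Set.mem_iInter.mp hω r
      rw [abs_sub_lt_iff]
      constructor
      · have := hr.2; simp only [hydef, hddef] at *; linarith
      · have := hr.1; simp only [hydef, hcdef] at *; linarith
    have hdist : dist y tstar < η := by
      refine lt_of_lt_of_le ((dist_pi_lt_iff hη').mpr fun r => ?_) hη'le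
      rw [Real.dist_eq]; exact hy r
    have := hball (Metric.mem_ball.mpr hdist)
    simpa [hGdef] using this
  have hfac : ∀ r, 0 < P (θ r ⁻¹' Set.Ioo (c r) (d r)) := by
    intro r
    rw [← Measure.map_apply (hmeas r) measurableSet_Ioo]
    rcases Nat.eq_zero_or_pos (r : ℕ) with h0 | hpos
    · have hre : r = ⟨0, hR⟩ := Fin.ext h0
      rw [hre, hlaw1]
      exact gammaMeasure_Ioo_pos ha1 (hcpos _) (hcd _)
    · rw [hlawm r hpos]
      exact gammaMeasure_Ioo_pos ha2 (hcpos r) (hcd r)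
  calc (0 : ℝ≥0∞) < ∏ r, P (θ r ⁻¹' Set.Ioo (c r) (d r)) :=
        CanonicallyOrderedAdd.prod_pos.mpr fun r _ => hfac r
    _ = P (⋂ r, θ r ⁻¹' Set.Ioo (c r) (d r)) :=
        (hindep.meas_iInter fun r => ⟨Set.Ioo (c r) (d r), measurableSet_Ioo, rfl⟩).symm
    _ ≤ P {ω | ∑ r, |(∏ m ∈ Finset.Iic r, (θ m ω)⁻¹) - lam0 r| < ε} := measure_mono hsub
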